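/- Let ω ∈ ℝ, λ ∈ ℂ, and let k be a nonnegative integer. Suppose f : (0,1) → ℂ is twice differentiable and satisfies f''(r) + f'(r)/r + (λ − iωk − k²/r²)·f(r) = 0 for all r ∈ (0,1). Define u on B₁ ∖ {0} by u(x) = f(|x|)·((x₁ + i x₂)/|x|)^k (so that in polar coordinates u = f(r)e^{ikθ}). Then u is twice continuously differentiable on B₁ ∖ {0} and satisfies −Δu + ω x⊥·∇u = λ·u at every point of B₁ ∖ {0}. -/

import Mathlib

open Set

noncomputable section

/-- First partial derivative `∂₁u` of a complex-valued function on `ℝ²`. -/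
def cpd1 (u : ℝ × ℝ → ℂ) (x : ℝ × ℝ) : ℂ := fderiv ℝ u x (1, 0)

/-- Second partial derivative `∂₂u` of a complex-valued function on `ℝ²`. -/
def cpd2 (u : ℝ × ℝ → ℂ) (x : ℝ × ℝ) : ℂ := fderiv ℝ u x (0, 1)

/-- The Laplacian `Δu = ∂₁₁u + ∂₂₂u` of a complex-valued function. -/
def clap (u : ℝ × ℝ → ℂ) (x : ℝ × ℝ) : ℂ := cpd1 (cpd1 u) x + cpd2 (cpd2 u) x

/-- The rotating-frame operator `L_ω u = −Δu + ω x⊥·∇u` on complex-valued functions. -/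
def cLop (ω : ℝ) (u : ℝ × ℝ → ℂ) (x : ℝ × ℝ) : ℂ :=
  -clap u x + (ω : ℂ) * (-(x.2 : ℂ) * cpd1 u x + (x.1 : ℂ) * cpd2 u x)

/-- The open unit disk `B₁ ⊂ ℝ²`. -/
def unitBall : Set (ℝ × ℝ) := {x | x.1 ^ 2 + x.2 ^ 2 < 1}

namespace BAux

def E1 : ℝ × ℝ →L[ℝ] ℂ := Complex.ofRealCLM.comp (ContinuousLinearMap.fst ℝ ℝ ℝ)
def E2 : ℝ × ℝ →L[ℝ] ℂ := Complex.ofRealCLM.comp (ContinuousLinearMap.snd ℝ ℝ ℝ)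

@[simp] lemma E1_apply (v : ℝ × ℝ) : E1 v = (v.1 : ℂ) := rfl
@[simp] lemma E2_apply (v : ℝ × ℝ) : E2 v = (v.2 : ℂ) := rfl

def rr (x : ℝ × ℝ) : ℝ := Real.sqrt (x.1 ^ 2 + x.2 ^ 2)
def zz (x : ℝ × ℝ) : ℂ := (x.1 : ℂ) + Complex.I * (x.2 : ℂ)

lemma nn_pos {x : ℝ × ℝ} (hx : x ≠ 0) : 0 < x.1 ^ 2 + x.2 ^ 2 := by
  rcases lt_or_eq_of_le (by positivity : (0:ℝ) ≤ x.1 ^ 2 + x.2 ^ 2) with h | h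
  · exact h
  · exfalso; apply hx
    have h1 : x.1 ^ 2 = 0 ∧ x.2 ^ 2 = 0 :=
      (add_eq_zero_iff_of_nonneg (sq_nonneg _) (sq_nonneg _)).1 h.symm
    have e1 : x.1 = 0 := by have := h1.1; nlinarith
    have e2 : x.2 = 0 := by have := h1.2; nlinarith
    exact Prod.ext e1 e2

lemma rr_pos {x : ℝ × ℝ} (hx : x ≠ 0) : 0 < rr x := Real.sqrt_pos.2 (nn_pos hx)

lemma rr_sq (x : ℝ × ℝ) : rr x ^ 2 = x.1 ^ 2 + x.2 ^ 2 := Real.sq_sqrt (by positivity)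

/-- derivative of the squared norm -/
lemma hasFDerivAt_nn (x : ℝ × ℝ) :
    HasFDerivAt (fun y : ℝ × ℝ => y.1 ^ 2 + y.2 ^ 2)
      ((2 * x.1) • ContinuousLinearMap.fst ℝ ℝ ℝ + (2 * x.2) • ContinuousLinearMap.snd ℝ ℝ ℝ) x := by
  have h1 : HasFDerivAt (fun y : ℝ × ℝ => y.1) (ContinuousLinearMap.fst ℝ ℝ ℝ) x := hasFDerivAt_fst
  have h2 : HasFDerivAt (fun y : ℝ × ℝ => y.2) (ContinuousLinearMap.snd ℝ ℝ ℝ) x := hasFDerivAt_snd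
  have h := ((h1.mul h1).add (h2.mul h2))
  have heq : (fun y : ℝ × ℝ => y.1 ^ 2 + y.2 ^ 2) = fun y : ℝ × ℝ => y.1 * y.1 + y.2 * y.2 := by
    funext y; ring
  rw [heq]
  refine h.congr_fderiv ?_
  refine ContinuousLinearMap.ext fun v => ?_
  simp
  ring

lemma hasFDerivAt_rr {x : ℝ × ℝ} (hx : x ≠ 0) :
    HasFDerivAt rr
      ((x.1 / rr x) • ContinuousLinearMap.fst ℝ ℝ ℝ + (x.2 / rr x) • ContinuousLinearMap.snd ℝ ℝ ℝ) x := by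
  have hn := nn_pos hx
  have hs : HasDerivAt Real.sqrt (1 / (2 * Real.sqrt (x.1 ^ 2 + x.2 ^ 2))) (x.1 ^ 2 + x.2 ^ 2) :=
    Real.hasDerivAt_sqrt hn.ne'
  have h := hs.comp_hasFDerivAt x (hasFDerivAt_nn x)
  refine h.congr_fderiv ?_
  have hr := rr_pos hx
  refine ContinuousLinearMap.ext fun v => ?_
  simp [rr, smul_smul]
  rw [rr] at hr
  field_simp

/-- chain rule through rr, ℂ-valued. -/
lemma comp_rr {φ : ℝ → ℂ} {a : ℂ} {x : ℝ × ℝ} (hx : x ≠ 0) (hφ : HasDerivAt φ a (rr x)) :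
    HasFDerivAt (fun y => φ (rr y))
      ((a * ((x.1 / rr x : ℝ) : ℂ)) • E1 + (a * ((x.2 / rr x : ℝ) : ℂ)) • E2) x := by
  have h := hφ.hasFDerivAt.comp x (hasFDerivAt_rr hx)
  refine h.congr_fderiv ?_
  refine ContinuousLinearMap.ext fun v => ?_
  simp [E1, E2]
  push_cast
  ring

lemma hasFDerivAt_zz (x : ℝ × ℝ) : HasFDerivAt zz ((1:ℂ) • E1 + Complex.I • E2) x := by
  have h : zz = fun y => ((1:ℂ) • E1 + Complex.I • E2) y := by
    funext y; simp [zz]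
  rw [h]
  exact ((1:ℂ) • E1 + Complex.I • E2).hasFDerivAt

lemma hasFDerivAt_zz_pow (m : ℕ) (x : ℝ × ℝ) :
    HasFDerivAt (fun y => zz y ^ m)
      (((m : ℂ) * zz x ^ (m - 1)) • E1 + ((m : ℂ) * zz x ^ (m - 1) * Complex.I) • E2) x := by
  have hp : HasDerivAt (fun w : ℂ => w ^ m) ((m : ℂ) * zz x ^ (m - 1)) (zz x) := hasDerivAt_pow m _
  have h := hp.comp_hasFDerivAt x (hasFDerivAt_zz x)
  refine h.congr_fderiv ?_
  refine ContinuousLinearMap.ext fun v => ?_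
  simp
  ring

/-- canonical-form product rule -/
lemma hmul {u v : ℝ × ℝ → ℂ} {a b c d : ℂ} {x : ℝ × ℝ}
    (hu : HasFDerivAt u (a • E1 + b • E2) x) (hv : HasFDerivAt v (c • E1 + d • E2) x) :
    HasFDerivAt (fun y => u y * v y)
      ((u x * c + v x * a) • E1 + (u x * d + v x * b) • E2) x := by
  have h := hu.mul hv
  refine h.congr_fderiv ?_
  refine ContinuousLinearMap.ext fun v' => ?_
  simp
  ring

lemma hconst_mul {v : ℝ × ℝ → ℂ} {c d : ℂ} (e : ℂ) {x : ℝ × ℝ}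
    (hv : HasFDerivAt v (c • E1 + d • E2) x) :
    HasFDerivAt (fun y => e * v y) ((e * c) • E1 + (e * d) • E2) x := by
  have h := (hasFDerivAt_const e x).mul hv
  refine h.congr_fderiv ?_
  refine ContinuousLinearMap.ext fun v' => ?_
  simp
  ring

lemma hadd {u v : ℝ × ℝ → ℂ} {a b c d : ℂ} {x : ℝ × ℝ}
    (hu : HasFDerivAt u (a • E1 + b • E2) x) (hv : HasFDerivAt v (c • E1 + d • E2) x) :
    HasFDerivAt (fun y => u y + v y) ((a + c) • E1 + (b + d) • E2) x := by
  have h := hu.add hv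
  refine h.congr_fderiv ?_
  refine ContinuousLinearMap.ext fun v' => ?_
  simp
  ring

lemma hcoord1 (x : ℝ × ℝ) :
    HasFDerivAt (fun y : ℝ × ℝ => (y.1 : ℂ)) ((1:ℂ) • E1 + (0:ℂ) • E2) x := by
  have : (fun y : ℝ × ℝ => (y.1 : ℂ)) = fun y => E1 y := by funext y; simp
  rw [this]
  refine E1.hasFDerivAt.congr_fderiv ?_
  refine ContinuousLinearMap.ext fun v => ?_
  simp
variable (f : ℝ → ℂ) (k : ℕ)

def cg (t : ℝ) : ℂ := f t / (t : ℂ) ^ k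
def cg1 (t : ℝ) : ℂ := deriv f t / (t : ℂ) ^ k - k * f t / (t : ℂ) ^ (k + 1)
def cg2 (t : ℝ) : ℂ :=
  deriv (deriv f) t / (t : ℂ) ^ k - 2 * k * deriv f t / (t : ℂ) ^ (k + 1)
    + k * (k + 1) * f t / (t : ℂ) ^ (k + 2)
def ch (t : ℝ) : ℂ := cg1 f k t / (t : ℂ)
def ch1 (t : ℝ) : ℂ := cg2 f k t / (t : ℂ) - cg1 f k t / (t : ℂ) ^ 2

variable {f k}

lemma hasDerivAt_ofReal (t : ℝ) : HasDerivAt (fun s : ℝ => (s : ℂ)) 1 t := by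
  simpa using (hasDerivAt_id t).ofReal_comp

lemma hasDerivAt_cpow (m : ℕ) (t : ℝ) :
    HasDerivAt (fun s : ℝ => (s : ℂ) ^ m) ((m : ℂ) * (t : ℂ) ^ (m - 1)) t := by
  exact (hasDerivAt_pow m ((t : ℝ) : ℂ)).comp_ofReal

lemma hasDerivAt_cg {t : ℝ} (ht : t ≠ 0) (hf : DifferentiableAt ℝ f t) :
    HasDerivAt (cg f k) (cg1 f k t) t := by
  have htc : (t : ℂ) ≠ 0 := Complex.ofReal_ne_zero.2 ht
  have hq : HasDerivAt (fun s : ℝ => (s : ℂ) ^ (k + 1)) (((k : ℂ) + 1) * (t : ℂ) ^ k) t := by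
    simpa using hasDerivAt_cpow (k + 1) t
  have hnum : HasDerivAt (fun s : ℝ => f s * (s : ℂ))
      (deriv f t * (t : ℂ) + f t * 1) t := (hf.hasDerivAt.mul (hasDerivAt_ofReal t))
  have halt : HasDerivAt (fun s : ℝ => f s * (s : ℂ) / (s : ℂ) ^ (k + 1))
      (((deriv f t * (t : ℂ) + f t * 1) * (t : ℂ) ^ (k + 1)
        - f t * (t : ℂ) * (((k : ℂ) + 1) * (t : ℂ) ^ k)) / ((t : ℂ) ^ (k + 1)) ^ 2) t :=
    hnum.div hq (pow_ne_zero _ htc)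
  have hev : (fun s : ℝ => f s * (s : ℂ) / (s : ℂ) ^ (k + 1)) =ᶠ[nhds t] cg f k := by
    filter_upwards [isOpen_ne.mem_nhds ht] with s hs
    have hsc : (s : ℂ) ≠ 0 := Complex.ofReal_ne_zero.2 hs
    simp only [cg, pow_succ]
    field_simp
  have := halt.congr_of_eventuallyEq hev.symm
  refine this.congr_deriv ?_
  simp only [cg1]
  field_simp
  ring

lemma hasDerivAt_cg1 {t : ℝ} (ht : t ≠ 0) (hf : DifferentiableAt ℝ f t)
    (hf' : DifferentiableAt ℝ (deriv f) t) :
    HasDerivAt (cg1 f k) (cg2 f k t) t := by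
  have htc : (t : ℂ) ≠ 0 := Complex.ofReal_ne_zero.2 ht
  have hq : HasDerivAt (fun s : ℝ => (s : ℂ) ^ (k + 1)) (((k : ℂ) + 1) * (t : ℂ) ^ k) t := by
    simpa using hasDerivAt_cpow (k + 1) t
  have hnum : HasDerivAt (fun s : ℝ => deriv f s * (s : ℂ) - (k : ℂ) * f s)
      ((deriv (deriv f) t * (t : ℂ) + deriv f t * 1) - (k : ℂ) * deriv f t) t :=
    (hf'.hasDerivAt.mul (hasDerivAt_ofReal t)).sub ((hf.hasDerivAt).const_mul (k : ℂ))
  have halt := hnum.div hq (pow_ne_zero _ htc)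
  have hev : (fun s : ℝ => (deriv f s * (s : ℂ) - (k : ℂ) * f s) / (s : ℂ) ^ (k + 1))
      =ᶠ[nhds t] cg1 f k := by
    filter_upwards [isOpen_ne.mem_nhds ht] with s hs
    have hsc : (s : ℂ) ≠ 0 := Complex.ofReal_ne_zero.2 hs
    simp only [cg1, pow_succ]
    field_simp
  have := halt.congr_of_eventuallyEq hev.symm
  refine this.congr_deriv ?_
  simp only [cg2]
  field_simp
  ring

lemma hasDerivAt_ch {t : ℝ} (ht : t ≠ 0) (hf : DifferentiableAt ℝ f t)
    (hf' : DifferentiableAt ℝ (deriv f) t) :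
    HasDerivAt (ch f k) (ch1 f k t) t := by
  have htc : (t : ℂ) ≠ 0 := Complex.ofReal_ne_zero.2 ht
  have := (hasDerivAt_cg1 ht hf hf' (k := k)).div (hasDerivAt_ofReal t) htc
  refine this.congr_deriv ?_
  simp only [ch1]
  field_simp

lemma ode_g {lam : ℂ} {ω : ℝ} {t : ℝ} (ht : t ≠ 0)
    (hode : deriv (deriv f) t + deriv f t / (t : ℂ) +
      (lam - Complex.I * (ω : ℂ) * (k : ℂ) - (k : ℂ) ^ 2 / (t : ℂ) ^ 2) * f t = 0) :
    cg2 f k t + (2 * (k : ℂ) + 1) * (cg1 f k t / (t : ℂ))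
      + (lam - Complex.I * (ω : ℂ) * (k : ℂ)) * cg f k t = 0 := by
  have htc : (t : ℂ) ≠ 0 := Complex.ofReal_ne_zero.2 ht
  have hkc : ((t : ℂ)) ^ k ≠ 0 := pow_ne_zero _ htc
  have key : cg2 f k t + (2 * (k : ℂ) + 1) * (cg1 f k t / (t : ℂ))
      + (lam - Complex.I * (ω : ℂ) * (k : ℂ)) * cg f k t
      = ((t : ℂ) ^ k)⁻¹ * (deriv (deriv f) t + deriv f t / (t : ℂ) +
        (lam - Complex.I * (ω : ℂ) * (k : ℂ) - (k : ℂ) ^ 2 / (t : ℂ) ^ 2) * f t) := by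
    simp only [cg, cg1, cg2, pow_succ]
    revert hkc
    generalize ((t : ℂ)) ^ k = P
    intro hkc
    ring_nf
  rw [key, hode, mul_zero]

def uu (f : ℝ → ℂ) (k : ℕ) (x : ℝ × ℝ) : ℂ := cg f k (rr x) * zz x ^ k

def AA (f : ℝ → ℂ) (k : ℕ) (x : ℝ × ℝ) : ℂ :=
  cg f k (rr x) * ((k : ℂ) * zz x ^ (k - 1))
    + zz x ^ k * (cg1 f k (rr x) * ((x.1 : ℂ) * (((rr x : ℝ) : ℂ))⁻¹))

def BB (f : ℝ → ℂ) (k : ℕ) (x : ℝ × ℝ) : ℂ :=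
  cg f k (rr x) * ((k : ℂ) * zz x ^ (k - 1) * Complex.I)
    + zz x ^ k * (cg1 f k (rr x) * ((x.2 : ℂ) * (((rr x : ℝ) : ℂ))⁻¹))

lemma hasFDerivAt_uu {f : ℝ → ℂ} {k : ℕ} {x : ℝ × ℝ} (hx : x ≠ 0)
    (hf : DifferentiableAt ℝ f (rr x)) :
    HasFDerivAt (uu f k) (AA f k x • E1 + BB f k x • E2) x := by
  have hrpos := rr_pos hx
  have hcg := comp_rr hx (hasDerivAt_cg hrpos.ne' hf (k := k))
  have h := hmul hcg (hasFDerivAt_zz_pow k x)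
  have hc : ((rr x : ℝ) : ℂ) ≠ 0 := Complex.ofReal_ne_zero.2 hrpos.ne'
  have e1 : AA f k x = cg f k (rr x) * ((k : ℂ) * zz x ^ (k - 1))
      + zz x ^ k * (cg1 f k (rr x) * (((x.1 / rr x : ℝ)) : ℂ)) := by
    rw [AA]; push_cast [Complex.ofReal_div]; ring
  have e2 : BB f k x = cg f k (rr x) * ((k : ℂ) * zz x ^ (k - 1) * Complex.I)
      + zz x ^ k * (cg1 f k (rr x) * (((x.2 / rr x : ℝ)) : ℂ)) := by
    rw [BB]; push_cast [Complex.ofReal_div]; ring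
  rw [e1, e2]
  exact h

/-- derivative of `x ↦ (↑(rr x))⁻¹`. -/
lemma hasFDerivAt_invrr {x : ℝ × ℝ} (hx : x ≠ 0) :
    HasFDerivAt (fun y => (((rr y : ℝ) : ℂ))⁻¹)
      (((-((((rr x : ℝ) : ℂ)) ^ 2)⁻¹) * ((x.1 / rr x : ℝ) : ℂ)) • E1
        + ((-((((rr x : ℝ) : ℂ)) ^ 2)⁻¹) * ((x.2 / rr x : ℝ) : ℂ)) • E2) x := by
  have hrpos := rr_pos hx
  have hc : ((rr x : ℝ) : ℂ) ≠ 0 := Complex.ofReal_ne_zero.2 hrpos.ne'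
  exact comp_rr hx ((hasDerivAt_inv hc).comp_ofReal)

lemma hconst (c : ℂ) (x : ℝ × ℝ) :
    HasFDerivAt (fun _ : ℝ × ℝ => c) ((0:ℂ) • E1 + (0:ℂ) • E2) x := by
  have h : HasFDerivAt (fun _ : ℝ × ℝ => c) (0 : ℝ × ℝ →L[ℝ] ℂ) x := hasFDerivAt_const c x
  refine h.congr_fderiv ?_
  refine ContinuousLinearMap.ext fun v => ?_
  simp

lemma hcoord2 (x : ℝ × ℝ) :
    HasFDerivAt (fun y : ℝ × ℝ => (y.2 : ℂ)) ((0:ℂ) • E1 + (1:ℂ) • E2) x := by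
  have : (fun y : ℝ × ℝ => (y.2 : ℂ)) = fun y => E2 y := by funext y; simp
  rw [this]
  refine E2.hasFDerivAt.congr_fderiv ?_
  refine ContinuousLinearMap.ext fun v => ?_
  simp

end BAux

open BAux in
/-- Construction of the eigenfunctions of `L_ω`. -/
theorem bessel_mode_is_eigenfunction
    (ω : ℝ) (lam : ℂ) (k : ℕ) (f : ℝ → ℂ)
    (hfdiff : ∀ r ∈ Ioo (0 : ℝ) 1, DifferentiableAt ℝ f r ∧ DifferentiableAt ℝ (deriv f) r)
    (hfode : ∀ r ∈ Ioo (0 : ℝ) 1,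
      deriv (deriv f) r + deriv f r / (r : ℂ) +
        (lam - Complex.I * (ω : ℂ) * (k : ℂ) - (k : ℂ) ^ 2 / (r : ℂ) ^ 2) * f r = 0) :
    ContDiffOn ℝ 2
      (fun x : ℝ × ℝ =>
        f (Real.sqrt (x.1 ^ 2 + x.2 ^ 2)) *
          (((x.1 : ℂ) + Complex.I * (x.2 : ℂ)) /
            ((Real.sqrt (x.1 ^ 2 + x.2 ^ 2) : ℝ) : ℂ)) ^ k)
      (unitBall \ {(0 : ℝ × ℝ)}) ∧
    ∀ x ∈ unitBall \ {(0 : ℝ × ℝ)},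
      cLop ω
          (fun x : ℝ × ℝ =>
            f (Real.sqrt (x.1 ^ 2 + x.2 ^ 2)) *
              (((x.1 : ℂ) + Complex.I * (x.2 : ℂ)) /
                ((Real.sqrt (x.1 ^ 2 + x.2 ^ 2) : ℝ) : ℂ)) ^ k)
          x =
        lam *
          (f (Real.sqrt (x.1 ^ 2 + x.2 ^ 2)) *
            (((x.1 : ℂ) + Complex.I * (x.2 : ℂ)) /
              ((Real.sqrt (x.1 ^ 2 + x.2 ^ 2) : ℝ) : ℂ)) ^ k) := by
  have hopen : IsOpen (unitBall \ {(0 : ℝ × ℝ)}) := by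
    apply IsOpen.sdiff _ isClosed_singleton
    have hcont : Continuous fun x : ℝ × ℝ => x.1 ^ 2 + x.2 ^ 2 := by continuity
    exact isOpen_lt hcont continuous_const
  have hmemS : ∀ y ∈ unitBall \ {(0 : ℝ × ℝ)}, y ≠ 0 ∧ rr y ∈ Ioo (0:ℝ) 1 := by
    intro y hy
    have hy0 : y ≠ 0 := fun h => hy.2 (by simp [h])
    refine ⟨hy0, rr_pos hy0, ?_⟩
    have h1 : y.1 ^ 2 + y.2 ^ 2 < 1 := hy.1
    have h2 := rr_sq y
    nlinarith [Real.sqrt_nonneg (y.1 ^ 2 + y.2 ^ 2), rr_pos hy0]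
  constructor
  · -- smoothness
    have hUD : UniqueDiffOn ℝ (Ioo (0:ℝ) 1) := uniqueDiffOn_Ioo 0 1
    have hdf : DifferentiableOn ℝ f (Ioo (0:ℝ) 1) :=
      fun t ht => ((hfdiff t ht).1).differentiableWithinAt
    have hdf' : DifferentiableOn ℝ (deriv f) (Ioo (0:ℝ) 1) :=
      fun t ht => ((hfdiff t ht).2).differentiableWithinAt
    have hcont2 : ContinuousOn (deriv (deriv f)) (Ioo (0:ℝ) 1) := by
      have hc : ContinuousOn (fun t : ℝ => -(deriv f t / (t : ℂ) +
          (lam - Complex.I * (ω : ℂ) * (k : ℂ) - (k : ℂ) ^ 2 / (t : ℂ) ^ 2) * f t))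
          (Ioo (0:ℝ) 1) := by
        apply ContinuousOn.neg
        apply ContinuousOn.add
        · exact (hdf'.continuousOn).div (Complex.continuous_ofReal.continuousOn)
            (fun t ht => Complex.ofReal_ne_zero.2 ht.1.ne')
        · apply ContinuousOn.mul
          · apply ContinuousOn.sub continuousOn_const
            exact continuousOn_const.div ((Complex.continuous_ofReal.continuousOn).pow 2)
              (fun t ht => pow_ne_zero _ (Complex.ofReal_ne_zero.2 ht.1.ne'))
          · exact hdf.continuousOn
      apply hc.congr
      intro t ht
      linear_combination hfode t ht
    have hf2 : ContDiffOn ℝ 2 f (Ioo (0:ℝ) 1) := by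
      have h2 : (2 : WithTop ℕ∞) = 1 + 1 := by norm_num
      rw [h2, contDiffOn_succ_iff_derivWithin hUD]
      refine ⟨hdf, by simp, ?_⟩
      have hcongr1 : ∀ t ∈ Ioo (0:ℝ) 1, derivWithin f (Ioo (0:ℝ) 1) t = deriv f t :=
        fun t ht => derivWithin_of_isOpen isOpen_Ioo ht
      apply ContDiffOn.congr _ hcongr1
      have h1 : (1 : WithTop ℕ∞) = 0 + 1 := by norm_num
      rw [h1, contDiffOn_succ_iff_derivWithin hUD]
      refine ⟨hdf', by simp, ?_⟩
      rw [contDiffOn_zero]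
      exact hcont2.congr
        (fun t ht => derivWithin_of_isOpen isOpen_Ioo ht)
    have hrrS : ContDiffOn ℝ 2 rr (unitBall \ {(0 : ℝ × ℝ)}) := by
      intro y hy
      have hy0 : y ≠ 0 := (hmemS y hy).1
      have hnn : ContDiffAt ℝ 2 (fun y : ℝ × ℝ => y.1 ^ 2 + y.2 ^ 2) y :=
        ((contDiff_fst.pow 2).add (contDiff_snd.pow 2)).contDiffAt
      exact ((Real.contDiffAt_sqrt (nn_pos hy0).ne').comp y hnn).contDiffWithinAt
    have hfr : ContDiffOn ℝ 2 (fun y : ℝ × ℝ => f (rr y)) (unitBall \ {(0 : ℝ × ℝ)}) :=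
      hf2.comp hrrS (fun y hy => (hmemS y hy).2)
    have hzzc : ContDiffOn ℝ 2 zz (unitBall \ {(0 : ℝ × ℝ)}) := by
      apply ContDiff.contDiffOn
      exact (Complex.ofRealCLM.contDiff.comp contDiff_fst).add
        (contDiff_const.mul (Complex.ofRealCLM.contDiff.comp contDiff_snd))
    have hrc : ContDiffOn ℝ 2 (fun y : ℝ × ℝ => ((rr y : ℝ) : ℂ)) (unitBall \ {(0 : ℝ × ℝ)}) :=
      Complex.ofRealCLM.contDiff.comp_contDiffOn hrrS
    have hq : ContDiffOn ℝ 2 (fun y : ℝ × ℝ => (zz y / ((rr y : ℝ) : ℂ)) ^ k)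
        (unitBall \ {(0 : ℝ × ℝ)}) := by
      have hinvc : ContDiffOn ℝ 2 (fun y : ℝ × ℝ => (((rr y : ℝ) : ℂ))⁻¹)
          (unitBall \ {(0 : ℝ × ℝ)}) :=
        hrc.inv (fun y hy => Complex.ofReal_ne_zero.2 (rr_pos (hmemS y hy).1).ne')
      have hmulc := (hzzc.mul hinvc).pow k
      simpa [div_eq_mul_inv] using hmulc
    exact hfr.mul hq
  · -- the eigenfunction equation
    have hfun : (fun x : ℝ × ℝ =>
        f (Real.sqrt (x.1 ^ 2 + x.2 ^ 2)) *
          (((x.1 : ℂ) + Complex.I * (x.2 : ℂ)) /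
            ((Real.sqrt (x.1 ^ 2 + x.2 ^ 2) : ℝ) : ℂ)) ^ k) = uu f k := by
      funext y
      simp only [uu, cg, zz, rr, div_pow]
      ring
    intro x hxS
    have hfunx : f (Real.sqrt (x.1 ^ 2 + x.2 ^ 2)) *
        (((x.1 : ℂ) + Complex.I * (x.2 : ℂ)) /
          ((Real.sqrt (x.1 ^ 2 + x.2 ^ 2) : ℝ) : ℂ)) ^ k = uu f k x := by
      simp only [uu, cg, zz, rr, div_pow]
      ring
    rw [hfun, hfunx]
    obtain ⟨hx0, hrI⟩ := hmemS x hxS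
    have hrne : rr x ≠ 0 := hrI.1.ne'
    have hcne : ((rr x : ℝ) : ℂ) ≠ 0 := Complex.ofReal_ne_zero.2 hrne
    have hdfx := hfdiff (rr x) hrI
    have hUall : ∀ y ∈ unitBall \ {(0 : ℝ × ℝ)},
        HasFDerivAt (uu f k) (AA f k y • E1 + BB f k y • E2) y := by
      intro y hy
      obtain ⟨hy0, hyI⟩ := hmemS y hy
      exact hasFDerivAt_uu hy0 (hfdiff (rr y) hyI).1
    have hcpd1 : ∀ y ∈ unitBall \ {(0 : ℝ × ℝ)}, cpd1 (uu f k) y = AA f k y := by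
      intro y hy
      rw [cpd1, (hUall y hy).fderiv]
      simp
    have hcpd2 : ∀ y ∈ unitBall \ {(0 : ℝ × ℝ)}, cpd2 (uu f k) y = BB f k y := by
      intro y hy
      rw [cpd2, (hUall y hy).fderiv]
      simp
    -- second derivatives at x
    have hcg := comp_rr hx0 (hasDerivAt_cg hrne hdfx.1 (k := k))
    have hcg1 := comp_rr hx0 (hasDerivAt_cg1 hrne hdfx.1 hdfx.2 (k := k))
    have hw := hconst_mul ((k : ℂ)) (hasFDerivAt_zz_pow (k - 1) x)
    have hzk := hasFDerivAt_zz_pow k x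
    have hinv := hasFDerivAt_invrr hx0
    have hA := hadd (hmul hcg hw) (hmul hzk (hmul hcg1 (hmul (hcoord1 x) hinv)))
    have hB := hadd (hmul hcg (hmul hw (hconst Complex.I x)))
      (hmul hzk (hmul hcg1 (hmul (hcoord2 x) hinv)))
    have hAx : HasFDerivAt (AA f k) _ x := hA
    have hBx : HasFDerivAt (BB f k) _ x := hB
    have hev1 : cpd1 (uu f k) =ᶠ[nhds x] AA f k := by
      filter_upwards [hopen.mem_nhds hxS] with y hy using hcpd1 y hy
    have hev2 : cpd2 (uu f k) =ᶠ[nhds x] BB f k := by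
      filter_upwards [hopen.mem_nhds hxS] with y hy using hcpd2 y hy
    have e11 : cpd1 (cpd1 (uu f k)) x = cpd1 (AA f k) x := by
      simp only [cpd1]
      rw [hev1.fderiv_eq]
    have e22 : cpd2 (cpd2 (uu f k)) x = cpd2 (BB f k) x := by
      simp only [cpd2]
      rw [hev2.fderiv_eq]
    rw [cLop, clap, e11, e22, hcpd1 x hxS, hcpd2 x hxS, cpd1, cpd2,
      hAx.fderiv, hBx.fderiv]
    have hodeg := ode_g (f := f) (k := k) hrne (hfode (rr x) hrI)
    have hXY : (((rr x : ℝ) : ℂ)) ^ 2 = (x.1 : ℂ) ^ 2 + (x.2 : ℂ) ^ 2 := by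
      have h := rr_sq x
      exact_mod_cast congrArg (fun r : ℝ => (r : ℂ)) h
    simp only [ContinuousLinearMap.add_apply, ContinuousLinearMap.coe_smul',
      Pi.smul_apply, E1_apply, E2_apply, smul_eq_mul, Complex.ofReal_one,
      Complex.ofReal_zero, mul_one, mul_zero, add_zero, zero_add]
    simp only [AA, BB, uu, zz]
    push_cast [Complex.ofReal_div]
    have hcc : ((rr x : ℝ) : ℂ) * ((((rr x : ℝ)) : ℂ))⁻¹ = 1 := mul_inv_cancel₀ hcne
    rcases k with _ | m
    · simp only [Nat.zero_sub, pow_zero, Nat.cast_zero]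
      push_cast at hodeg ⊢
      linear_combination (norm := ring_nf) (-(1:ℂ)) * hodeg +
        ((cg2 f 0 (rr x)) * ((((rr x : ℝ)) : ℂ))⁻¹ ^ 2 -
          (cg1 f 0 (rr x)) * ((((rr x : ℝ)) : ℂ))⁻¹ ^ 3) * hXY +
        ((cg1 f 0 (rr x) * ((((rr x : ℝ)) : ℂ))⁻¹ - cg2 f 0 (rr x)) *
          (((rr x : ℝ) : ℂ) * ((((rr x : ℝ)) : ℂ))⁻¹ + 1)) * hcc
    · simp only [Nat.succ_sub_one]
      push_cast at hodeg ⊢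
      linear_combination (norm := ring_nf)
        (-(((x.1:ℂ) + Complex.I * (x.2:ℂ)) ^ (m+1))) * hodeg
        + (((x.1:ℂ) + Complex.I * (x.2:ℂ)) ^ (m+1) * (cg2 f (m+1) (rr x) * ((((rr x : ℝ)) : ℂ))⁻¹ ^ 2 - cg1 f (m+1) (rr x) * ((((rr x : ℝ)) : ℂ))⁻¹ ^ 3)) * hXY
        + (-(cg f (m+1) (rr x) * ((m:ℂ)+1) * (m:ℂ) * ((x.1:ℂ) + Complex.I * (x.2:ℂ)) ^ (m-1))) * Complex.I_sq
        + (((x.1:ℂ) + Complex.I * (x.2:ℂ)) ^ m * ((x.1:ℂ) + Complex.I * (x.2:ℂ)) * (cg1 f (m+1) (rr x) * ((((rr x : ℝ)) : ℂ))⁻¹ - cg2 f (m+1) (rr x)) * ((((rr x : ℝ)) : ℂ) * ((((rr x : ℝ)) : ℂ))⁻¹ + 1)) * hcc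
        + (-(cg f (m+1) (rr x) * ((m:ℂ)+1) * (x.2:ℂ) * (ω:ℂ) * ((x.1:ℂ) + Complex.I * (x.2:ℂ)) ^ m)) * Complex.I_sq

end
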